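/- Let w : ℕ → ℝ be a weight sequence, let a : ℕ → ℝ satisfy a k ≥ 0 for all k, and let Q ∈ ℝ be such that the series ∑_k a k · exp(−(w k)·s) converges for every complex s with Re s > Q. Then for every n ∈ ℕ and every complex s₀ with Re s₀ > Q, the n-th iterated derivative of F(s) = ∑_k a k · exp(−(w k)·s) at s₀ equals ∑_k a k · (−(w k))^n · exp(−(w k)·s₀). -/

import Mathlib

/-- A weight sequence: strictly increasing and nonnegative. -/
def IsWeightSeq (w : ℕ → ℝ) : Prop :=
  StrictMono w ∧ ∀ k, 0 ≤ w k

private lemma pow_mul_exp_le (m : ℕ) {t δ : ℝ} (ht : 0 ≤ t) (hδ : 0 < δ) :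
    t ^ m * Real.exp (-(t * δ)) ≤ m.factorial / δ ^ m := by
  have h := Real.pow_div_factorial_le_exp (x := t * δ) (mul_nonneg ht hδ.le) m
  rw [div_le_iff₀ (by positivity)] at h
  have hexp : (0:ℝ) < Real.exp (t * δ) := Real.exp_pos _
  have h1 : t ^ m * δ ^ m ≤ (m.factorial : ℝ) * Real.exp (t * δ) := by
    calc t ^ m * δ ^ m = (t * δ) ^ m := (mul_pow t δ m).symm
      _ ≤ (m.factorial : ℝ) * Real.exp (t * δ) := by linarith
  rw [Real.exp_neg, le_div_iff₀ (pow_pos hδ m)]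
  rw [mul_right_comm]
  calc t ^ m * δ ^ m * (Real.exp (t * δ))⁻¹
      ≤ ((m.factorial : ℝ) * Real.exp (t * δ)) * (Real.exp (t * δ))⁻¹ :=
        mul_le_mul_of_nonneg_right h1 (inv_nonneg.mpr hexp.le)
    _ = (m.factorial : ℝ) := by field_simp

private lemma norm_term (a wk : ℝ) (hw : 0 ≤ wk) (ha : 0 ≤ a) (n : ℕ) (z : ℂ) :
    ‖(a : ℂ) * (-(wk : ℂ)) ^ n * Complex.exp (-(wk : ℂ) * z)‖
      = a * wk ^ n * Real.exp (-(wk * z.re)) := by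
  rw [norm_mul, norm_mul, norm_pow, Complex.norm_exp]
  simp [Complex.norm_real, abs_of_nonneg ha, abs_of_nonneg hw, Complex.mul_re]

private lemma summable_pow (w a : ℕ → ℝ)
    (hw : IsWeightSeq w) (ha : ∀ k, 0 ≤ a k) (Q : ℝ)
    (hconv : ∀ s : ℂ, Q < s.re →
      Summable (fun k => (a k : ℂ) * Complex.exp (-(w k : ℂ) * s)))
    (n : ℕ) (z : ℂ) (hz : Q < z.re) :
    Summable (fun k => (a k : ℂ) * (-(w k : ℂ)) ^ n * Complex.exp (-(w k : ℂ) * z)) := by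
  set δ : ℝ := (z.re - Q) / 2 with hδdef
  have hδ : 0 < δ := by simp [hδdef]; linarith
  have hs := (hconv ((Q + δ : ℝ) : ℂ) (by simp; linarith)).norm
  apply Summable.of_norm
  apply Summable.of_nonneg_of_le (fun k => norm_nonneg _) (fun k => ?_)
    (hs.mul_left (n.factorial / δ ^ n))
  rw [norm_term _ _ (hw.2 k) (ha k)]
  have hnorm2 : ‖(a k : ℂ) * Complex.exp (-(w k : ℂ) * ((Q + δ : ℝ) : ℂ))‖
      = a k * Real.exp (-(w k * (Q + δ))) := by
    have := norm_term (a k) (w k) (hw.2 k) (ha k) 0 ((Q + δ : ℝ) : ℂ)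
    simpa using this
  rw [hnorm2]
  have hzre : z.re = (Q + δ) + δ := by simp [hδdef]; ring
  have hsplit : Real.exp (-(w k * z.re))
      = Real.exp (-(w k * (Q + δ))) * Real.exp (-(w k * δ)) := by
    rw [← Real.exp_add]; congr 1; rw [hzre]; ring
  rw [hsplit]
  have hb := pow_mul_exp_le n (hw.2 k) hδ (t := w k)
  have he : 0 < Real.exp (-(w k * (Q + δ))) := Real.exp_pos _
  calc a k * w k ^ n * (Real.exp (-(w k * (Q + δ))) * Real.exp (-(w k * δ)))
      = (a k * Real.exp (-(w k * (Q + δ)))) * (w k ^ n * Real.exp (-(w k * δ))) := by ring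
    _ ≤ (a k * Real.exp (-(w k * (Q + δ)))) * (n.factorial / δ ^ n) :=
        mul_le_mul_of_nonneg_left hb (mul_nonneg (ha k) he.le)
    _ = n.factorial / δ ^ n * (a k * Real.exp (-(w k * (Q + δ)))) := by ring

private lemma hasDerivAt_F (w a : ℕ → ℝ)
    (hw : IsWeightSeq w) (ha : ∀ k, 0 ≤ a k) (Q : ℝ)
    (hconv : ∀ s : ℂ, Q < s.re →
      Summable (fun k => (a k : ℂ) * Complex.exp (-(w k : ℂ) * s)))
    (n : ℕ) (s₀ : ℂ) (hs₀ : Q < s₀.re) :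
    HasDerivAt (fun z : ℂ => ∑' k, (a k : ℂ) * (-(w k : ℂ)) ^ n * Complex.exp (-(w k : ℂ) * z))
      (∑' k, (a k : ℂ) * (-(w k : ℂ)) ^ (n + 1) * Complex.exp (-(w k : ℂ) * s₀)) s₀ := by
  set r : ℝ := (s₀.re - Q) / 3 with hrdef
  have hr : 0 < r := by simp [hrdef]; linarith
  have hball : ∀ y : ℂ, y ∈ Metric.ball s₀ r → Q + 2 * r < y.re := by
    intro y hy
    have h1 : |(y - s₀).re| ≤ ‖y - s₀‖ := Complex.abs_re_le_norm _
    have h2 : ‖y - s₀‖ < r := by rwa [Metric.mem_ball, dist_eq_norm] at hy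
    have h3 : |y.re - s₀.re| < r := by simpa using lt_of_le_of_lt h1 h2
    have := abs_lt.mp h3
    have : s₀.re = Q + 3 * r := by simp [hrdef]; ring
    linarith [(abs_lt.mp h3).1]
  have hsum := (hconv ((Q + r : ℝ) : ℂ) (by simp; linarith)).norm
  apply hasDerivAt_tsum_of_isPreconnected
    (u := fun k => (n + 1).factorial / r ^ (n + 1) *
      ‖(a k : ℂ) * Complex.exp (-(w k : ℂ) * ((Q + r : ℝ) : ℂ))‖)
    (hsum.mul_left _) Metric.isOpen_ball ((convex_ball s₀ r).isPreconnected)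
    (g' := fun k y => (a k : ℂ) * (-(w k : ℂ)) ^ (n + 1) * Complex.exp (-(w k : ℂ) * y))
    ?_ ?_ (Metric.mem_ball_self hr) ?_ (Metric.mem_ball_self hr)
  · intro k y _
    have h1 : HasDerivAt (fun z : ℂ => Complex.exp (-(w k : ℂ) * z))
        (Complex.exp (-(w k : ℂ) * y) * (-(w k : ℂ))) y := by
      simpa using (((hasDerivAt_id y).const_mul (-(w k : ℂ)))).cexp
    have := h1.const_mul ((a k : ℂ) * (-(w k : ℂ)) ^ n)
    convert this using 1
    · rfl
    ring
  · intro k y hy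
    have hyre := hball y hy
    rw [norm_term _ _ (hw.2 k) (ha k)]
    have hnorm2 : ‖(a k : ℂ) * Complex.exp (-(w k : ℂ) * ((Q + r : ℝ) : ℂ))‖
        = a k * Real.exp (-(w k * (Q + r))) := by
      have := norm_term (a k) (w k) (hw.2 k) (ha k) 0 ((Q + r : ℝ) : ℂ)
      simpa using this
    simp only [hnorm2]
    have hb := pow_mul_exp_le (n + 1) (hw.2 k) hr (t := w k)
    have hexpmono : Real.exp (-(w k * y.re)) ≤ Real.exp (-(w k * (Q + 2 * r))) := by
      apply Real.exp_le_exp.mpr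
      have := mul_le_mul_of_nonneg_left hyre.le (hw.2 k)
      linarith
    have hsplit : Real.exp (-(w k * (Q + 2 * r)))
        = Real.exp (-(w k * (Q + r))) * Real.exp (-(w k * r)) := by
      rw [← Real.exp_add]; ring_nf
    calc a k * w k ^ (n + 1) * Real.exp (-(w k * y.re))
        ≤ a k * w k ^ (n + 1) * Real.exp (-(w k * (Q + 2 * r))) := by
          apply mul_le_mul_of_nonneg_left hexpmono
          exact mul_nonneg (ha k) (pow_nonneg (hw.2 k) _)
      _ = (a k * Real.exp (-(w k * (Q + r)))) * (w k ^ (n + 1) * Real.exp (-(w k * r))) := by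
          rw [hsplit]; ring
      _ ≤ (a k * Real.exp (-(w k * (Q + r)))) * ((n + 1).factorial / r ^ (n + 1)) :=
          mul_le_mul_of_nonneg_left hb (mul_nonneg (ha k) (Real.exp_pos _).le)
      _ = (n + 1).factorial / r ^ (n + 1) * (a k * Real.exp (-(w k * (Q + r)))) := by ring
  · exact summable_pow w a hw ha Q hconv n s₀ hs₀

theorem dirichlet_iteratedDeriv (w a : ℕ → ℝ)
    (hw : IsWeightSeq w) (ha : ∀ k, 0 ≤ a k)
    (Q : ℝ)
    (hconv : ∀ s : ℂ, Q < s.re →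
      Summable (fun k => (a k : ℂ) * Complex.exp (-(w k : ℂ) * s))) :
    ∀ (n : ℕ) (s₀ : ℂ), Q < s₀.re →
      iteratedDeriv n
        (fun z : ℂ => ∑' k, (a k : ℂ) * Complex.exp (-(w k : ℂ) * z)) s₀
      = ∑' k, (a k : ℂ) * (-(w k : ℂ)) ^ n * Complex.exp (-(w k : ℂ) * s₀) := by
  intro n
  induction n with
  | zero =>
    intro s₀ _
    simp [iteratedDeriv_zero]
  | succ n ih =>
    intro s₀ hs₀
    rw [iteratedDeriv_succ]
    have hopen : IsOpen {z : ℂ | Q < z.re} := isOpen_lt continuous_const Complex.continuous_re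
    have heq : (iteratedDeriv n
        (fun z : ℂ => ∑' k, (a k : ℂ) * Complex.exp (-(w k : ℂ) * z)))
        =ᶠ[nhds s₀] (fun z : ℂ =>
          ∑' k, (a k : ℂ) * (-(w k : ℂ)) ^ n * Complex.exp (-(w k : ℂ) * z)) := by
      filter_upwards [hopen.mem_nhds hs₀] with z hz
      exact ih z hz
    rw [heq.deriv_eq]
    exact (hasDerivAt_F w a hw ha Q hconv n s₀ hs₀).deriv
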